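/- arXiv:2209.11912 — 3 statements merged into one kernel-verified Lean document; each statement's English description precedes it below -/
import Mathlib

section
/- Suppose the pair (G, A) has the falsification by fellow traveler property with constant k and A is totally ordered. If u ∈ A* represents g ∈ G and u is not the short reverse lexicographic normal form of g, then there exists a word v with v =_G u, v <_srev u, and u and v 2k-fellow travel. -/
/-- The group element represented by a word over the generating set. -/
def evalWord {A : Type*} {G : Type*} [Group G] (π : A → G) (w : List A) : G :=
  (w.map π).prod

/-- The distance in the Cayley graph of `G` with respect to the generators `π`
between `g` and `h` is at most `k`. -/
def distLE {A : Type*} {G : Type*} [Group G] (π : A → G) (g h : G) (k : ℕ) : Prop :=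
  ∃ w : List A, w.length ≤ k ∧ g * evalWord π w = h

/-- Words `u` and `v` `k`-fellow travel. -/
def FellowTravel {A : Type*} {G : Type*} [Group G] (π : A → G) (k : ℕ)
    (u v : List A) : Prop :=
  ∀ n : ℕ, distLE π (evalWord π (u.take n)) (evalWord π (v.take n)) k

/-- The word length of a group element with respect to the generators `π`. -/
noncomputable def wordLength {A : Type*} {G : Type*} [Group G] (π : A → G) (g : G) : ℕ :=
  sInf {n : ℕ | ∃ w : List A, w.length = n ∧ evalWord π w = g}

/-- A word is geodesic if its length is the word length of the element it
represents. -/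
def IsGeodesic {A : Type*} {G : Type*} [Group G] (π : A → G) (u : List A) : Prop :=
  u.length = wordLength π (evalWord π u)

/-- The falsification by fellow traveler property with constant `k`: every
non-geodesic word has a strictly shorter `k`-fellow-traveling witness. -/
def FFTP {A : Type*} {G : Type*} [Group G] (π : A → G) (k : ℕ) : Prop :=
  ∀ u : List A, ¬ IsGeodesic π u →
    ∃ v : List A, v.length < u.length ∧ evalWord π v = evalWord π u ∧
      FellowTravel π k u v

/-- The short reverse lexicographic order. -/
def srevLt {A : Type*} [LinearOrder A] (u v : List A) : Prop :=
  u.length < v.length ∨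
    (u.length = v.length ∧ List.Lex (· < ·) u.reverse v.reverse)

section Aux
variable {A G : Type*} [Group G] (π : A → G)

lemma evalWord_append (u v : List A) :
    evalWord π (u ++ v) = evalWord π u * evalWord π v := by
  simp [evalWord]

lemma evalWord_cons (a : A) (u : List A) :
    evalWord π (a :: u) = π a * evalWord π u := by
  simp [evalWord]

lemma distLE_refl (g : G) (m : ℕ) : distLE π g g m :=
  ⟨[], by simp, by simp [evalWord]⟩

lemma distLE_of_eq {g h : G} (hgh : g = h) (m : ℕ) : distLE π g h m :=
  hgh ▸ distLE_refl π g m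

lemma distLE_mono {g h : G} {k1 k2 : ℕ} (h1 : distLE π g h k1) (hk : k1 ≤ k2) :
    distLE π g h k2 := by
  obtain ⟨w, hw, he⟩ := h1; exact ⟨w, hw.trans hk, he⟩

lemma distLE_trans {g h j : G} {k1 k2 : ℕ} (h1 : distLE π g h k1)
    (h2 : distLE π h j k2) : distLE π g j (k1 + k2) := by
  obtain ⟨w1, hw1, he1⟩ := h1
  obtain ⟨w2, hw2, he2⟩ := h2
  refine ⟨w1 ++ w2, by simpa using Nat.add_le_add hw1 hw2, ?_⟩
  rw [evalWord_append, ← mul_assoc, he1, he2]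

lemma fellowTravel_mono {k1 k2 : ℕ} {u v : List A} (h : FellowTravel π k1 u v)
    (hk : k1 ≤ k2) : FellowTravel π k2 u v := fun n => distLE_mono π (h n) hk

lemma fellowTravel_trans {k1 k2 : ℕ} {u v w : List A} (h1 : FellowTravel π k1 u v)
    (h2 : FellowTravel π k2 v w) : FellowTravel π (k1 + k2) u w :=
  fun n => distLE_trans π (h1 n) (h2 n)

lemma wordLength_le {g : G} {w : List A} (hw : evalWord π w = g) :
    wordLength π g ≤ w.length :=
  Nat.sInf_le ⟨w, rfl, hw⟩

lemma exists_wordLength (hgen : ∀ g : G, ∃ w : List A, evalWord π w = g) (g : G) :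
    ∃ w : List A, w.length = wordLength π g ∧ evalWord π w = g := by
  obtain ⟨w, hw⟩ := hgen g
  have hne : {n : ℕ | ∃ w : List A, w.length = n ∧ evalWord π w = g}.Nonempty :=
    ⟨w.length, w, rfl, hw⟩
  obtain ⟨w', h1, h2⟩ := Nat.sInf_mem hne
  exact ⟨w', h1, h2⟩

lemma isGeodesic_prefix (hgen : ∀ g : G, ∃ w : List A, evalWord π w = g)
    {p s : List A} (h : IsGeodesic π (p ++ s)) : IsGeodesic π p := by
  have h1 : wordLength π (evalWord π p) ≤ p.length := wordLength_le π rfl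
  obtain ⟨w, hwl, hwe⟩ := exists_wordLength π hgen (evalWord π p)
  have h2 : wordLength π (evalWord π (p ++ s)) ≤ w.length + s.length := by
    have : evalWord π (w ++ s) = evalWord π (p ++ s) := by
      rw [evalWord_append, evalWord_append, hwe]
    simpa using wordLength_le π this
  unfold IsGeodesic at h ⊢
  simp only [List.length_append] at h
  omega

lemma lex_decomp {A : Type*} [LinearOrder A] :
    ∀ {x y : List A}, List.Lex (· < ·) x y → x.length = y.length →
    ∃ (s : List A) (b a : A) (t1 t2 : List A),
      x = s ++ b :: t1 ∧ y = s ++ a :: t2 ∧ b < a ∧ t1.length = t2.length := by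
  intro x y h
  induction h with
  | nil => intro h; simp at h
  | @cons a l1 l2 h ih =>
    intro hl
    obtain ⟨s, b, a', t1, t2, h1, h2, h3, h4⟩ := ih (by simpa using hl)
    exact ⟨a :: s, b, a', t1, t2, by simp [h1], by simp [h2], h3, h4⟩
  | @rel a l1 b l2 h =>
    intro hl
    exact ⟨[], a, b, l1, l2, rfl, rfl, h, by simpa using hl⟩

lemma lex_append {A : Type*} [LinearOrder A] {b a : A} (hba : b < a) :
    ∀ (s t1 t2 : List A), List.Lex (· < ·) (s ++ b :: t1) (s ++ a :: t2) := by
  intro s t1 t2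
  induction s with
  | nil => exact List.Lex.rel hba
  | cons c s ih => exact List.Lex.cons ih

end Aux

/-- Lemma: if `(G, A)` has FFTP with constant `k` and `u` is not the short
reverse lexicographic normal form of the element it represents, then there is
a word `v` representing the same element with `v <_srev u` such that `u` and
`v` `2k`-fellow travel. -/
theorem fftp_srev_witness {A : Type*} {G : Type*} [Group G] [Fintype A]
    [LinearOrder A] (π : A → G)
    (hgen : ∀ g : G, ∃ w : List A, evalWord π w = g)
    (hinv : ∀ a : A, ∃ b : A, π b = (π a)⁻¹)
    (k : ℕ) (hfftp : FFTP π k) (u : List A)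
    (hnf : ∃ v : List A, evalWord π v = evalWord π u ∧ srevLt v u) :
    ∃ v : List A, evalWord π v = evalWord π u ∧ srevLt v u ∧
      FellowTravel π (2 * k) u v := by
  classical
  by_cases hgeo : IsGeodesic π u
  · obtain ⟨v, hveq, hsrev⟩ := hnf
    rcases hsrev with hlt | ⟨hlen, hlex⟩
    · exfalso
      have h1 : wordLength π (evalWord π u) ≤ v.length := wordLength_le π hveq
      unfold IsGeodesic at hgeo
      omega
    · obtain ⟨s, b, a, t1, t2, hx, hy, hba, ht⟩ := lex_decomp hlex (by simp [hlen])
      set u1 := t2.reverse with hu1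
      set u2 := s.reverse with hu2
      set v1 := t1.reverse with hv1
      have hu : u = u1 ++ a :: u2 := by
        have := congrArg List.reverse hy
        simpa [hu1, hu2] using this
      have hv : v = v1 ++ b :: u2 := by
        have := congrArg List.reverse hx
        simpa [hv1, hu2] using this
      have hlen1 : v1.length = u1.length := by simp [hv1, hu1, ht]
      have hkey : evalWord π v1 * π b = evalWord π u1 * π a := by
        have h := hveq
        rw [hu, hv, evalWord_append, evalWord_append, evalWord_cons, evalWord_cons,
          ← mul_assoc, ← mul_assoc] at h
        exact mul_right_cancel h
      have hu' : (u1 ++ [a]) ++ u2 = u := by simp [hu]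
      have hgu1a : IsGeodesic π (u1 ++ [a]) := by
        apply isGeodesic_prefix π hgen (s := u2)
        rw [hu']; exact hgeo
      have he1 : evalWord π (v1 ++ [b]) = evalWord π (u1 ++ [a]) := by
        rw [evalWord_append, evalWord_append]
        simpa [evalWord] using hkey
      have hgv1b : IsGeodesic π (v1 ++ [b]) := by
        unfold IsGeodesic at hgu1a ⊢
        rw [he1, ← hgu1a]
        simp [hlen1]
      have hgv1 : IsGeodesic π v1 := isGeodesic_prefix π hgen hgv1b
      obtain ⟨c, hc⟩ := hinv b
      set z := u1 ++ [a, c] with hz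
      have hez : evalWord π z = evalWord π v1 := by
        rw [hz, evalWord_append]
        have h2 : evalWord π [a, c] = π a * π c := by simp [evalWord]
        rw [h2, hc, ← mul_assoc, ← hkey, mul_assoc, mul_inv_cancel, mul_one]
      have hwlv1 : wordLength π (evalWord π v1) = v1.length := hgv1.symm
      have hzng : ¬ IsGeodesic π z := by
        unfold IsGeodesic
        rw [hez, hwlv1]
        simp [hz]
        omega
      obtain ⟨w, hwlt, hweq, hwft⟩ := hfftp z hzng
      have hzlen : z.length = u1.length + 2 := by simp [hz]
      have hwge : u1.length ≤ w.length := by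
        have := wordLength_le π (g := evalWord π v1) (by rw [hweq, hez])
        omega
      have hmain : ∃ w' : List A, w'.length = u1.length ∧
          evalWord π w' = evalWord π v1 ∧ FellowTravel π (2 * k) z w' := by
        rcases Nat.lt_or_ge w.length (u1.length + 1) with hcase | hcase
        · exact ⟨w, by omega, by rw [hweq, hez],
            fellowTravel_mono π hwft (by omega)⟩
        · have hwng : ¬ IsGeodesic π w := by
            unfold IsGeodesic
            have h3 : wordLength π (evalWord π w) = v1.length := by
              rw [hweq, hez, hwlv1]
            omega
          obtain ⟨w', h1, h2, h3⟩ := hfftp w hwng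
          have h4 : u1.length ≤ w'.length := by
            have := wordLength_le π (g := evalWord π v1) (by rw [h2, hweq, hez])
            omega
          refine ⟨w', by omega, by rw [h2, hweq, hez], ?_⟩
          have := fellowTravel_trans π hwft h3
          simpa [two_mul] using this
      obtain ⟨w', hw'l, hw'e, hw'ft⟩ := hmain
      have hkey' : evalWord π w' * π b = evalWord π u1 * π a := by
        rw [hw'e, hkey]
      refine ⟨w' ++ b :: u2, ?_, ?_, ?_⟩
      · rw [evalWord_append, evalWord_cons, hu, evalWord_append, evalWord_cons,
          ← mul_assoc, ← mul_assoc, hkey']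
      · refine Or.inr ⟨by simp [hu, hw'l], ?_⟩
        have h1 : (w' ++ b :: u2).reverse = u2.reverse ++ b :: w'.reverse := by
          simp
        have h2 : u.reverse = u2.reverse ++ a :: u1.reverse := by
          rw [hu]; simp
        rw [h1, h2]
        exact lex_append hba _ _ _
      · intro n
        rcases le_or_gt n u1.length with hn | hn
        · have h1 : u.take n = u1.take n := by
            rw [hu, List.take_append,
              Nat.sub_eq_zero_of_le hn, List.take_zero, List.append_nil]
          have h2 : (w' ++ b :: u2).take n = w'.take n := by
            rw [List.take_append, hw'l,
              Nat.sub_eq_zero_of_le hn, List.take_zero, List.append_nil]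
          have h3 : z.take n = u1.take n := by
            rw [hz, List.take_append,
              Nat.sub_eq_zero_of_le hn, List.take_zero, List.append_nil]
          rw [h1, h2]
          have := hw'ft n
          rwa [h3] at this
        · apply distLE_of_eq
          have hm : n - u1.length = (n - u1.length - 1) + 1 := by omega
          have h1 : u.take n = u1 ++ a :: u2.take (n - u1.length - 1) := by
            rw [hu, List.take_append,
              List.take_of_length_le (by omega), hm, List.take_succ_cons, Nat.add_sub_cancel]
          have h2 : (w' ++ b :: u2).take n
              = w' ++ b :: u2.take (n - u1.length - 1) := by
            rw [List.take_append,
              List.take_of_length_le (by omega), hw'l, hm, List.take_succ_cons, Nat.add_sub_cancel]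
          rw [h1, h2, evalWord_append, evalWord_append, evalWord_cons, evalWord_cons,
            ← mul_assoc, ← mul_assoc, hkey']
  · obtain ⟨v, hlen, heq, hft⟩ := hfftp u hgeo
    exact ⟨v, heq, Or.inl hlen, fellowTravel_mono π hft (by omega)⟩
end

section
/- Restriction of a convergent prefix-rewriting system to minimally reducible left-hand sides preserves the normal form set: if R is a convergent prefix-rewriting system for a group G over alphabet A with normal form set N (the irreducible words), and R' = {(u, v) ∈ R : u = wl with w ∈ N and l ∈ A}, then R' is also a convergent prefix-rewriting system for G and the set of R'-irreducible words equals N. -/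
/-- One step of prefix-rewriting: `u ++ w →_R v ++ w` for `(u, v) ∈ R`. -/
def RwStep {A : Type*} (R : Set (List A × List A)) (x y : List A) : Prop :=
  ∃ p ∈ R, ∃ w : List A, x = p.1 ++ w ∧ y = p.2 ++ w

/-- A word is irreducible if no prefix-rewriting applies to it. -/
def Irred {A : Type*} (R : Set (List A × List A)) (x : List A) : Prop :=
  ¬ ∃ y : List A, RwStep R x y

/-- Restricting a convergent prefix-rewriting system for a group `G` to the
rules whose left-hand sides are minimally reducible yields a convergent
prefix-rewriting system for `G` with the same irreducible words. -/
theorem cprs_restrict_minimally_reducible {A : Type*} {G : Type*} [Group G]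
    [Fintype A] (π : A → G) (R : Set (List A × List A))
    (hrel : ∀ p ∈ R, evalWord π p.1 = evalWord π p.2)
    (hterm : ∀ f : ℕ → List A, ¬ ∀ n : ℕ, RwStep R (f n) (f (n + 1)))
    (huniq : ∀ g : G, ∃! w : List A, Irred R w ∧ evalWord π w = g) :
    let R' : Set (List A × List A) :=
      {p ∈ R | ∃ (w : List A) (l : A), p.1 = w ++ [l] ∧ Irred R w}
    (∀ p ∈ R', evalWord π p.1 = evalWord π p.2) ∧
    (∀ f : ℕ → List A, ¬ ∀ n : ℕ, RwStep R' (f n) (f (n + 1))) ∧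
    (∀ g : G, ∃! w : List A, Irred R' w ∧ evalWord π w = g) ∧
    (∀ w : List A, Irred R' w ↔ Irred R w) := by
  intro R'
  have hsub : R' ⊆ R := fun p hp => hp.1
  have hstep : ∀ x y : List A, RwStep R' x y → RwStep R x y := by
    rintro x y ⟨p, hp, w, h1, h2⟩
    exact ⟨p, hsub hp, w, h1, h2⟩
  have hne : ∀ p ∈ R, p.1 ≠ ([] : List A) := by
    intro p hp h
    obtain ⟨w, ⟨hw, _⟩, _⟩ := huniq (1 : G)
    exact hw ⟨p.2 ++ w, p, hp, w, by simp [h], rfl⟩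
  have key : ∀ n : ℕ, ∀ x : List A, x.length ≤ n →
      (∃ y, RwStep R x y) → ∃ y, RwStep R' x y := by
    intro n
    induction n with
    | zero =>
      rintro x hx ⟨y, p, hp, w, h1, _⟩
      exact absurd (List.eq_nil_of_length_eq_zero (Nat.le_antisymm hx (Nat.zero_le _)) ▸ h1)
        (by
          intro h
          exact hne p hp (List.append_eq_nil_iff.mp h.symm).1)
    | succ n ih =>
      rintro x hx ⟨y, p, hp, w, h1, _⟩
      rcases List.eq_nil_or_concat p.1 with hnil | ⟨a, l, hal'⟩
      · exact absurd hnil (hne p hp)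
      have hal : p.1 = a ++ [l] := by simpa [List.concat_eq_append] using hal'
      by_cases hirr : Irred R a
      · exact ⟨p.2 ++ w, p, ⟨hp, a, l, hal, hirr⟩, w, h1, rfl⟩
      · have hared : ∃ y, RwStep R a y := not_not.mp hirr
        have hlen : a.length ≤ n := by
          have : x.length = a.length + 1 + w.length := by
            rw [h1, hal]; simp; omega
          omega
        obtain ⟨y2, q, hq, w2, ha, _⟩ := ih a hlen hared
        refine ⟨q.2 ++ (w2 ++ [l] ++ w), q, hq, w2 ++ [l] ++ w, ?_, rfl⟩
        rw [h1, hal, ha]; simp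
  have hiff : ∀ w : List A, Irred R' w ↔ Irred R w := by
    intro w
    constructor
    · intro h hred
      exact h (key w.length w le_rfl hred)
    · intro h hred
      exact h (hred.imp fun y hy => hstep w y hy)
  refine ⟨fun p hp => hrel p (hsub hp), ?_, ?_, hiff⟩
  · intro f hf
    exact hterm f fun n => hstep _ _ (hf n)
  · intro g
    obtain ⟨w, ⟨hw1, hw2⟩, hwu⟩ := huniq g
    exact ⟨w, ⟨(hiff w).mpr hw1, hw2⟩, fun v ⟨hv1, hv2⟩ => hwu v ⟨(hiff v).mp hv1, hv2⟩⟩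
end

section
/- If L is a synchronously regular language of pairs of words (i.e., its padded extension L^p is regular) and F is a finite language of pairs of words, then the set L · F = {(u_1 v_1, u_2 v_2) : (u_1, u_2) ∈ L, (v_1, v_2) ∈ F} is synchronously regular. -/
/-- The padded extension of a pair of words: the shorter component is padded
at the end with the padding symbol `none`. -/
def padPair {A : Type*} (p : List A × List A) : List (Option A × Option A) :=
  (p.1.map some ++ List.replicate (max p.1.length p.2.length - p.1.length) none).zip
    (p.2.map some ++ List.replicate (max p.1.length p.2.length - p.2.length) none)

/-- The padded extension of a language of pairs of words. -/
def padLang {A : Type*} (L : Set (List A × List A)) :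
    Language (Option A × Option A) :=
  {w | ∃ p ∈ L, w = padPair p}

/-- A language of pairs is synchronously regular if its padded extension is
accepted by a finite state automaton. -/
def SyncRegular {A : Type*} (L : Set (List A × List A)) : Prop :=
  ∃ (Q : Type) (_ : Fintype Q) (M : DFA (Option A × Option A) Q),
    M.accepts = padLang L

/-! ### Auxiliary lemmas about `padPair` -/

theorem SyncAux.zip_replicate_left' {B C : Type*} (c : C) (l : List B) (n : ℕ)
    (h : n = l.length) :
    (List.replicate n c).zip l = l.map (fun y => (c, y)) := by
  subst h
  induction l with
  | nil => rfl
  | cons y ys ih => simp [List.replicate_succ, ih]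

theorem SyncAux.zip_replicate_right' {B C : Type*} (c : C) (l : List B) (n : ℕ)
    (h : n = l.length) :
    l.zip (List.replicate n c) = l.map (fun y => (y, c)) := by
  subst h
  induction l with
  | nil => rfl
  | cons y ys ih => simp [List.replicate_succ, ih]

/-- `padPair` as a `zipWithAll`. -/
theorem SyncAux.padPair_eq' {A : Type*} (l1 l2 : List A) :
    padPair (l1, l2) = List.zipWithAll Prod.mk l1 l2 := by
  induction l1 generalizing l2 with
  | nil =>
    cases l2 with
    | nil => rfl
    | cons y ys =>
      simp [padPair, List.zipWithAll]
      rw [SyncAux.zip_replicate_left' _ _ _ (by simp)]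
      simp [Function.comp]
  | cons x xs ih =>
    cases l2 with
    | nil =>
      simp [padPair, List.zipWithAll]
      rw [SyncAux.zip_replicate_right' _ _ _ (by simp)]
      simp [Function.comp]
    | cons y ys =>
      have := ih ys
      simp [padPair, List.zipWithAll, Nat.succ_max_succ] at this ⊢
      exact this

theorem SyncAux.lemA {A : Type*} (x : A) (l1 l2 : List A) (h : l2.length ≤ l1.length) :
    List.zipWithAll Prod.mk (l1 ++ [x]) l2 =
      List.zipWithAll Prod.mk l1 l2 ++ [(some x, none)] := by
  induction l1 generalizing l2 with
  | nil =>
    have : l2 = [] := List.eq_nil_of_length_eq_zero (Nat.le_zero.mp h)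
    subst this; simp [List.zipWithAll]
  | cons a as ih =>
    cases l2 with
    | nil => simp [List.zipWithAll]
    | cons b bs => simp_all [List.zipWithAll]

theorem SyncAux.lemA2 {A : Type*} (l1 l2 : List A) (h : l2.length ≤ l1.length) :
    ∀ ℓ ∈ List.zipWithAll Prod.mk l1 l2, ℓ.1 ≠ none := by
  induction l1 generalizing l2 with
  | nil =>
    have : l2 = [] := List.eq_nil_of_length_eq_zero (Nat.le_zero.mp h)
    subst this; simp [List.zipWithAll]
  | cons a as ih =>
    cases l2 with
    | nil =>
      simp only [List.zipWithAll]
      intro ℓ hm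
      simp at hm
      rcases hm with rfl | ⟨c, _, rfl⟩ <;> simp
    | cons b bs =>
      simp only [List.zipWithAll, List.mem_cons]
      rintro ℓ (rfl | hm)
      · simp
      · exact ih bs (by simpa using h) ℓ hm

theorem SyncAux.lemB {A : Type*} (x : A) (l1 l2 : List A) (h : l1.length < l2.length) :
    ∃ z y s, List.zipWithAll Prod.mk l1 l2 = z ++ (none, some y) :: s ∧
      (∀ ℓ ∈ z, ℓ.1 ≠ none) ∧
      List.zipWithAll Prod.mk (l1 ++ [x]) l2 = z ++ (some x, some y) :: s := by
  induction l1 generalizing l2 with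
  | nil =>
    cases l2 with
    | nil => simp at h
    | cons b bs =>
      exact ⟨[], b, bs.map (fun y => (none, some y)), by simp [List.zipWithAll], by simp,
        by simp [List.zipWithAll]⟩
  | cons a as ih =>
    cases l2 with
    | nil => simp at h
    | cons b bs =>
      obtain ⟨z, y, s, h1, h2, h3⟩ := ih bs (by simpa using h)
      refine ⟨(some a, some b) :: z, y, s, ?_, ?_, ?_⟩
      · simp [List.zipWithAll, h1]
      · exact List.forall_mem_cons.mpr ⟨by simp, h2⟩
      · simp [List.zipWithAll, h3]

theorem SyncAux.lemD {σ : Type*} (z z' : List (Option σ × Option σ)) (β β' : Option σ)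
    (s s' : List (Option σ × Option σ))
    (hz : ∀ ℓ ∈ z, ℓ.1 ≠ none) (hz' : ∀ ℓ ∈ z', ℓ.1 ≠ none)
    (h : z ++ (none, β) :: s = z' ++ (none, β') :: s') :
    z = z' ∧ β = β' ∧ s = s' := by
  induction z generalizing z' with
  | nil =>
    cases z' with
    | nil => simp_all
    | cons c z'' =>
      exfalso
      have : c = (none, β) := by simpa using (congrArg (fun l => l.headI) h).symm
      exact hz' c (by simp) (by simp [this])
  | cons c z'' ih =>
    cases z' with
    | nil =>
      exfalso
      have : c = (none, β') := by simpa using congrArg (fun l => l.headI) h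
      exact hz c (by simp) (by simp [this])
    | cons c' z''' =>
      simp only [List.cons_append, List.cons.injEq] at h
      obtain ⟨rfl, h⟩ := h
      obtain ⟨h1, h2, h3⟩ := ih z''' (fun ℓ hm => hz ℓ (by simp [hm]))
        (fun ℓ hm => hz' ℓ (by simp [hm])) h
      exact ⟨by rw [h1], h2, h3⟩

theorem SyncAux.map_swap_zwa {A : Type*} (l1 l2 : List A) :
    (List.zipWithAll Prod.mk l1 l2).map Prod.swap = List.zipWithAll Prod.mk l2 l1 := by
  induction l1 generalizing l2 with
  | nil => cases l2 <;> simp [List.zipWithAll, Prod.swap, Function.comp]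
  | cons a as ih => cases l2 <;> simp [List.zipWithAll, Prod.swap, Function.comp, ih]

theorem SyncAux.map_swap_padPair {A : Type*} (p : List A × List A) :
    (padPair p).map Prod.swap = padPair (p.2, p.1) := by
  rw [show p = (p.1, p.2) from rfl, SyncAux.padPair_eq', SyncAux.padPair_eq',
    SyncAux.map_swap_zwa]

/-! ### Closure properties of `SyncRegular` -/

section DFAUnion
variable {α : Type*} {Q1 Q2 : Type*}

def SyncAux.prodDFA (M1 : DFA α Q1) (M2 : DFA α Q2) : DFA α (Q1 × Q2) where
  step q a := (M1.step q.1 a, M2.step q.2 a)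
  start := (M1.start, M2.start)
  accept := {q | q.1 ∈ M1.accept ∨ q.2 ∈ M2.accept}

theorem SyncAux.prodDFA_evalFrom (M1 : DFA α Q1) (M2 : DFA α Q2) (q1 : Q1) (q2 : Q2)
    (w : List α) :
    (SyncAux.prodDFA M1 M2).evalFrom (q1, q2) w = (M1.evalFrom q1 w, M2.evalFrom q2 w) := by
  induction w generalizing q1 q2 with
  | nil => rfl
  | cons a as ih => exact ih _ _

theorem SyncAux.prodDFA_accepts (M1 : DFA α Q1) (M2 : DFA α Q2) (w : List α) :
    w ∈ (SyncAux.prodDFA M1 M2).accepts ↔ w ∈ M1.accepts ∨ w ∈ M2.accepts := by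
  simp only [DFA.mem_accepts, DFA.eval]
  rw [show (SyncAux.prodDFA M1 M2).start = (M1.start, M2.start) from rfl,
    SyncAux.prodDFA_evalFrom]
  rfl

end DFAUnion

theorem SyncAux.syncRegular_union {A : Type*} {L1 L2 : Set (List A × List A)}
    (h1 : SyncRegular L1) (h2 : SyncRegular L2) : SyncRegular (L1 ∪ L2) := by
  obtain ⟨Q1, f1, M1, hM1⟩ := h1
  obtain ⟨Q2, f2, M2, hM2⟩ := h2
  refine ⟨Q1 × Q2, by infer_instance, SyncAux.prodDFA M1 M2, ?_⟩
  ext w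
  rw [SyncAux.prodDFA_accepts, hM1, hM2]
  simp only [padLang, Set.mem_setOf_eq]
  constructor
  · rintro (⟨p, hp, rfl⟩ | ⟨p, hp, rfl⟩)
    exacts [⟨p, Or.inl hp, rfl⟩, ⟨p, Or.inr hp, rfl⟩]
  · rintro ⟨p, hp | hp, rfl⟩
    exacts [Or.inl ⟨p, hp, rfl⟩, Or.inr ⟨p, hp, rfl⟩]

theorem SyncAux.syncRegular_empty {A : Type*} :
    SyncRegular (∅ : Set (List A × List A)) := by
  refine ⟨Unit, by infer_instance, ⟨fun _ _ => (), (), ∅⟩, ?_⟩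
  ext w
  simp [DFA.mem_accepts, padLang]
  exact Set.notMem_empty _

theorem SyncAux.syncRegular_of_nfa {A : Type*} (L : Set (List A × List A))
    (h : ∃ (Q : Type) (_ : Fintype Q) (N : NFA (Option A × Option A) Q),
      N.accepts = padLang L) : SyncRegular L := by
  obtain ⟨Q, fQ, N, hN⟩ := h
  exact ⟨Set Q, by infer_instance, N.toDFA, by rw [N.toDFA_correct, hN]⟩

def SyncAux.swapLang {A : Type*} (L : Set (List A × List A)) : Set (List A × List A) :=
  {q | (q.2, q.1) ∈ L}

theorem SyncAux.syncRegular_swap {A : Type*} {L : Set (List A × List A)}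
    (h : SyncRegular L) : SyncRegular (SyncAux.swapLang L) := by
  obtain ⟨Q, fQ, M, hM⟩ := h
  refine ⟨Q, fQ, ⟨fun q ℓ => M.step q ℓ.swap, M.start, M.accept⟩, ?_⟩
  have heval : ∀ (w : List (Option A × Option A)) (q : Q),
      DFA.evalFrom ⟨fun q ℓ => M.step q ℓ.swap, M.start, M.accept⟩ q w
        = M.evalFrom q (w.map Prod.swap) := by
    intro w
    induction w with
    | nil => intro q; rfl
    | cons a as ih => intro q; simpa [DFA.evalFrom] using ih _
  ext w
  rw [DFA.mem_accepts, DFA.eval, heval]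
  change w.map Prod.swap ∈ M.accepts ↔ _
  rw [hM]
  constructor
  · rintro ⟨p, hp, hw⟩
    refine ⟨(p.2, p.1), by simpa [SyncAux.swapLang] using hp, ?_⟩
    have h3 : w = (w.map Prod.swap).map Prod.swap := by
      simp [List.map_map, Prod.swap_swap_eq]
    rw [h3, hw, SyncAux.map_swap_padPair]
  · rintro ⟨p, hp, rfl⟩
    exact ⟨(p.2, p.1), hp, SyncAux.map_swap_padPair p⟩

/-! ### The key NFA construction: appending one letter to the first component -/

/-- NFA accepting the padded words of `{(u₁ ++ [x], u₂) | (u₁,u₂) ∈ L}`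
given a DFA `M` for `padLang L`. -/
def SyncAux.appNFA {A : Type*} {Q : Type} (M : DFA (Option A × Option A) Q) (x : A) :
    NFA (Option A × Option A) (Q ⊕ (Q ⊕ Unit)) where
  step s ℓ :=
    match s with
    | .inl q => {t | (ℓ.1 ≠ none ∧ t = .inl (M.step q ℓ)) ∨
        (∃ β, ℓ = (some x, β) ∧ t = .inr (.inl (M.step q (none, β)))) ∨
        (ℓ = (some x, none) ∧ q ∈ M.accept ∧ t = .inr (.inr ()))}
    | .inr (.inl q) => {.inr (.inl (M.step q ℓ))}
    | .inr (.inr _) => ∅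
  start := {.inl M.start}
  accept := {s | (∃ q ∈ M.accept, s = .inr (.inl q)) ∨ s = .inr (.inr ())}

namespace SyncAux

variable {A : Type*} {Q : Type}

theorem lem_pre (M : DFA (Option A × Option A) Q) (x : A)
    (w : List (Option A × Option A)) (q' : Q) :
    (Sum.inl q' ∈ (appNFA M x).eval w) ↔
      ((∀ ℓ ∈ w, ℓ.1 ≠ none) ∧ q' = M.eval w) := by
  induction w using List.reverseRecOn generalizing q' with
  | nil => simp [appNFA, NFA.eval, DFA.eval, eq_comm]
  | append_singleton w a ih =>
    rw [NFA.eval_append_singleton, NFA.mem_stepSet]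
    constructor
    · rintro ⟨t, ht, hstep⟩
      match t with
      | .inl q'' =>
        simp only [appNFA, Set.mem_setOf_eq] at hstep
        rcases hstep with ⟨h1, h2⟩ | ⟨β, _, h2⟩ | ⟨_, _, h2⟩
        · obtain ⟨hall, rfl⟩ := (ih q'').mp ht
          simp only [Sum.inl.injEq] at h2
          refine ⟨?_, ?_⟩
          · intro ℓ hℓ
            rcases List.mem_append.mp hℓ with h | h
            · exact hall ℓ h
            · simpa using (List.mem_singleton.mp h) ▸ h1
          · rw [h2, DFA.eval_append_singleton]
        · exact absurd h2 (by simp)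
        · exact absurd h2 (by simp)
      | .inr (.inl q'') => exact absurd hstep (by simp [appNFA])
      | .inr (.inr u) => exact absurd hstep (by simp [appNFA])
    · rintro ⟨hall, rfl⟩
      refine ⟨.inl (M.eval w), (ih _).mpr ⟨fun ℓ hℓ => hall ℓ (by simp [hℓ]), rfl⟩, ?_⟩
      simp only [appNFA, Set.mem_setOf_eq]
      exact Or.inl ⟨hall a (by simp), by rw [DFA.eval_append_singleton]⟩

theorem lem_fin (M : DFA (Option A × Option A) Q) (x : A)
    (w : List (Option A × Option A)) :
    (Sum.inr (Sum.inr ()) ∈ (appNFA M x).eval w) ↔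
      ∃ w', w = w' ++ [((some x : Option A), (none : Option A))] ∧
        (∀ ℓ ∈ w', ℓ.1 ≠ none) ∧ M.eval w' ∈ M.accept := by
  induction w using List.reverseRecOn with
  | nil => simp [appNFA, NFA.eval]
  | append_singleton w a ih =>
    rw [NFA.eval_append_singleton, NFA.mem_stepSet]
    constructor
    · rintro ⟨t, ht, hstep⟩
      match t with
      | .inl q'' =>
        simp only [appNFA, Set.mem_setOf_eq] at hstep
        rcases hstep with ⟨_, h2⟩ | ⟨β, _, h2⟩ | ⟨h1, hacc, _⟩
        · exact absurd h2 (by simp)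
        · exact absurd h2 (by simp)
        · obtain ⟨hall, rfl⟩ := (lem_pre M x w _).mp ht
          exact ⟨w, by rw [h1], hall, hacc⟩
      | .inr (.inl q'') => exact absurd hstep (by simp [appNFA])
      | .inr (.inr u) => exact absurd hstep (by simp [appNFA])
    · rintro ⟨w', heq, hall, hacc⟩
      obtain ⟨rfl, rfl⟩ : w = w' ∧ a = ((some x : Option A), (none : Option A)) := by
        have := List.append_inj' heq (by simp)
        exact ⟨this.1, by simpa using this.2⟩
      refine ⟨.inl (M.eval w), (lem_pre M x w _).mpr ⟨hall, rfl⟩, ?_⟩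
      simp only [appNFA, Set.mem_setOf_eq]
      exact Or.inr (Or.inr ⟨trivial, hacc, trivial⟩)

theorem lem_post (M : DFA (Option A × Option A) Q) (x : A)
    (w : List (Option A × Option A)) (q' : Q) :
    (Sum.inr (Sum.inl q') ∈ (appNFA M x).eval w) ↔
      ∃ p β s, w = p ++ ((some x : Option A), β) :: s ∧
        (∀ ℓ ∈ p, ℓ.1 ≠ none) ∧
        q' = M.eval (p ++ ((none : Option A), β) :: s) := by
  induction w using List.reverseRecOn generalizing q' with
  | nil =>
    simp only [appNFA, NFA.eval, NFA.evalFrom_nil, Set.mem_singleton_iff]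
    constructor
    · intro h; exact absurd h (by simp)
    · rintro ⟨p, β, s, heq, -, -⟩
      exact absurd heq (by simp)
  | append_singleton w a ih =>
    rw [NFA.eval_append_singleton, NFA.mem_stepSet]
    constructor
    · rintro ⟨t, ht, hstep⟩
      match t with
      | .inl q'' =>
        simp only [appNFA, Set.mem_setOf_eq] at hstep
        rcases hstep with ⟨_, h2⟩ | ⟨β, h1, h2⟩ | ⟨_, _, h2⟩
        · exact absurd h2 (by simp)
        · obtain ⟨hall, rfl⟩ := (lem_pre M x w _).mp ht
          simp only [Sum.inr.injEq, Sum.inl.injEq] at h2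
          exact ⟨w, β, [], by rw [h1], hall, by rw [h2, DFA.eval_append_singleton]⟩
        · exact absurd h2 (by simp)
      | .inr (.inl q'') =>
        simp only [appNFA, Set.mem_singleton_iff, Sum.inr.injEq, Sum.inl.injEq] at hstep
        obtain ⟨p, β, s, rfl, hall, rfl⟩ := (ih q'').mp ht
        refine ⟨p, β, s ++ [a], by simp, hall, ?_⟩
        rw [hstep, ← DFA.eval_append_singleton]
        congr 1
        simp
      | .inr (.inr u) => exact absurd hstep (by simp [appNFA])
    · rintro ⟨p, β, s, heq, hall, rfl⟩
      rcases s.eq_nil_or_concat with rfl | ⟨s', a', rfl⟩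
      · obtain ⟨rfl, rfl⟩ : w = p ∧ a = ((some x : Option A), β) := by
          have := List.append_inj' heq (by simp)
          exact ⟨this.1, by simpa using this.2⟩
        refine ⟨.inl (M.eval w), (lem_pre M x w _).mpr ⟨hall, rfl⟩, ?_⟩
        simp only [appNFA, Set.mem_setOf_eq]
        refine Or.inr (Or.inl ⟨β, rfl, ?_⟩)
        rw [DFA.eval_append_singleton]
      · obtain ⟨rfl, rfl⟩ : w = p ++ ((some x : Option A), β) :: s' ∧ a = a' := by
          have h2 : w ++ [a] = (p ++ ((some x : Option A), β) :: s') ++ [a'] := by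
            simpa using heq
          have := List.append_inj' h2 (by simp)
          exact ⟨this.1, by simpa using this.2⟩
        refine ⟨.inr (.inl (M.eval (p ++ ((none : Option A), β) :: s'))),
          (ih _).mpr ⟨p, β, s', rfl, hall, rfl⟩, ?_⟩
        simp only [appNFA, Set.mem_singleton_iff, Sum.inr.injEq, Sum.inl.injEq]
        rw [← DFA.eval_append_singleton]
        congr 1
        simp

theorem appNFA_accepts {L : Set (List A × List A)} (M : DFA (Option A × Option A) Q)
    (x : A) (hM : M.accepts = padLang L) :
    (appNFA M x).accepts = padLang {q | ∃ p ∈ L, q = (p.1 ++ [x], p.2)} := by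
  ext w
  rw [NFA.mem_accepts]
  constructor
  · rintro ⟨st, hst, hev⟩
    rcases hst with ⟨q', hq', rfl⟩ | rfl
    · -- accepted through a `post` state
      obtain ⟨p, β, s, rfl, hall, heq'⟩ := (lem_post M x _ _).mp hev
      have hmem : p ++ ((none : Option A), β) :: s ∈ padLang L := by
        rw [← hM, DFA.mem_accepts]
        rw [← heq']
        exact hq'
      obtain ⟨⟨l1, l2⟩, hpp, heq⟩ := hmem
      rw [padPair_eq'] at heq
      have hlt : l1.length < l2.length := by
        by_contra hc
        push_neg at hc
        have := lemA2 l1 l2 hc ((none : Option A), β) (by rw [← heq]; simp)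
        simp at this
      obtain ⟨z, y, s', hz1, hz2, hz3⟩ := lemB x l1 l2 hlt
      obtain ⟨rfl, rfl, rfl⟩ := lemD p z β (some y) s s' hall hz2 (heq.trans hz1)
      refine ⟨(l1 ++ [x], l2), ⟨(l1, l2), hpp, rfl⟩, ?_⟩
      rw [padPair_eq', hz3]
    · -- accepted through the `fin` state
      obtain ⟨w', rfl, hall, hacc⟩ := (lem_fin M x _).mp hev
      have hmem : w' ∈ padLang L := by rw [← hM]; exact hacc
      obtain ⟨⟨l1, l2⟩, hpp, rfl⟩ := hmem
      have hle : l2.length ≤ l1.length := by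
        by_contra hc
        push_neg at hc
        obtain ⟨z, y, s', hz1, _, _⟩ := lemB x l1 l2 hc
        have := hall ((none : Option A), some y) (by rw [padPair_eq', hz1]; simp)
        simp at this
      refine ⟨(l1 ++ [x], l2), ⟨(l1, l2), hpp, rfl⟩, ?_⟩
      rw [padPair_eq', padPair_eq', lemA x l1 l2 hle]
  · rintro ⟨q, ⟨⟨l1, l2⟩, hp, rfl⟩, rfl⟩
    rcases le_or_gt l2.length l1.length with hle | hlt
    · refine ⟨.inr (.inr ()), Or.inr rfl, (lem_fin M x _).mpr
        ⟨padPair (l1, l2), ?_, ?_, ?_⟩⟩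
      · rw [padPair_eq', padPair_eq', lemA x l1 l2 hle]
      · rw [padPair_eq']
        exact lemA2 l1 l2 hle
      · rw [← DFA.mem_accepts, hM]
        exact ⟨(l1, l2), hp, rfl⟩
    · obtain ⟨z, y, s', hz1, hz2, hz3⟩ := lemB x l1 l2 hlt
      refine ⟨.inr (.inl (M.eval (z ++ ((none : Option A), some y) :: s'))),
        Or.inl ⟨_, ?_, rfl⟩, (lem_post M x _ _).mpr ⟨z, some y, s', ?_, hz2, rfl⟩⟩
      · rw [← DFA.mem_accepts]
        have : z ++ ((none : Option A), some y) :: s' = padPair (l1, l2) := by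
          rw [padPair_eq', hz1]
        rw [this, hM]
        exact ⟨(l1, l2), hp, rfl⟩
      · rw [padPair_eq', hz3]

theorem syncRegular_appendFst (x : A) {L : Set (List A × List A)}
    (h : SyncRegular L) :
    SyncRegular {q | ∃ p ∈ L, q = (p.1 ++ [x], p.2)} := by
  obtain ⟨Q, fQ, M, hM⟩ := h
  exact syncRegular_of_nfa _ ⟨Q ⊕ (Q ⊕ Unit), by infer_instance, appNFA M x,
    appNFA_accepts M x hM⟩

theorem syncRegular_appendSnd (y : A) {L : Set (List A × List A)}
    (h : SyncRegular L) :
    SyncRegular {q | ∃ p ∈ L, q = (p.1, p.2 ++ [y])} := by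
  have h1 := syncRegular_swap (syncRegular_appendFst y (syncRegular_swap h))
  have hset : swapLang {q | ∃ p ∈ swapLang L, q = (p.1 ++ [y], p.2)}
      = {q | ∃ p ∈ L, q = (p.1, p.2 ++ [y])} := by
    ext q
    constructor
    · rintro ⟨p, hp, heq⟩
      refine ⟨(p.2, p.1), hp, ?_⟩
      have h1 : q.2 = p.1 ++ [y] := congrArg Prod.fst heq
      have h2 : q.1 = p.2 := congrArg Prod.snd heq
      exact Prod.ext h2 h1
    · rintro ⟨p, hp, rfl⟩
      exact ⟨(p.2, p.1), by simpa [swapLang] using hp, rfl⟩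
  rwa [hset] at h1

theorem syncRegular_appendWordFst (v : List A) {L : Set (List A × List A)}
    (h : SyncRegular L) :
    SyncRegular {q | ∃ p ∈ L, q = (p.1 ++ v, p.2)} := by
  induction v generalizing L with
  | nil =>
    have hset : {q | ∃ p ∈ L, q = (p.1 ++ [], p.2)} = L := by
      ext q; simp
    rwa [hset]
  | cons a v ih =>
    have h2 := ih (syncRegular_appendFst a h)
    have hset : {q | ∃ p ∈ {q | ∃ p ∈ L, q = (p.1 ++ [a], p.2)}, q = (p.1 ++ v, p.2)}
        = {q | ∃ p ∈ L, q = (p.1 ++ a :: v, p.2)} := by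
      ext q
      constructor
      · rintro ⟨r, ⟨p, hp, rfl⟩, rfl⟩
        exact ⟨p, hp, by simp⟩
      · rintro ⟨p, hp, rfl⟩
        exact ⟨(p.1 ++ [a], p.2), ⟨p, hp, rfl⟩, by simp⟩
    rwa [hset] at h2

theorem syncRegular_appendWordSnd (v : List A) {L : Set (List A × List A)}
    (h : SyncRegular L) :
    SyncRegular {q | ∃ p ∈ L, q = (p.1, p.2 ++ v)} := by
  induction v generalizing L with
  | nil =>
    have hset : {q | ∃ p ∈ L, q = (p.1, p.2 ++ [])} = L := by
      ext q; simp
    rwa [hset]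
  | cons a v ih =>
    have h2 := ih (syncRegular_appendSnd a h)
    have hset : {q | ∃ p ∈ {q | ∃ p ∈ L, q = (p.1, p.2 ++ [a])}, q = (p.1, p.2 ++ v)}
        = {q | ∃ p ∈ L, q = (p.1, p.2 ++ a :: v)} := by
      ext q
      constructor
      · rintro ⟨r, ⟨p, hp, rfl⟩, rfl⟩
        exact ⟨p, hp, by simp⟩
      · rintro ⟨p, hp, rfl⟩
        exact ⟨(p.1, p.2 ++ [a]), ⟨p, hp, rfl⟩, by simp⟩
    rwa [hset] at h2

theorem syncRegular_appendPair (f : List A × List A) {L : Set (List A × List A)}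
    (h : SyncRegular L) :
    SyncRegular {q | ∃ p ∈ L, q = (p.1 ++ f.1, p.2 ++ f.2)} := by
  have h2 := syncRegular_appendWordSnd f.2 (syncRegular_appendWordFst f.1 h)
  have hset : {q | ∃ p ∈ {q | ∃ p ∈ L, q = (p.1 ++ f.1, p.2)}, q = (p.1, p.2 ++ f.2)}
      = {q | ∃ p ∈ L, q = (p.1 ++ f.1, p.2 ++ f.2)} := by
    ext q
    constructor
    · rintro ⟨r, ⟨p, hp, rfl⟩, rfl⟩
      exact ⟨p, hp, rfl⟩
    · rintro ⟨p, hp, rfl⟩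
      exact ⟨(p.1 ++ f.1, p.2), ⟨p, hp, rfl⟩, rfl⟩
  rwa [hset] at h2

end SyncAux

/-- Synchronously regular languages of pairs are closed under concatenation
on the right by a finite language of pairs. -/
theorem syncRegular_concat_finite {A : Type*} [Fintype A]
    (L F : Set (List A × List A)) (hL : SyncRegular L) (hF : F.Finite) :
    SyncRegular {q : List A × List A |
      ∃ p ∈ L, ∃ f ∈ F, q = (p.1 ++ f.1, p.2 ++ f.2)} := by
  refine Set.Finite.induction_on
    (motive := fun F _ => SyncRegular {q : List A × List A |
      ∃ p ∈ L, ∃ f ∈ F, q = (p.1 ++ f.1, p.2 ++ f.2)}) F hF ?_ ?_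
  · show SyncRegular _
    have hset : {q : List A × List A |
        ∃ p ∈ L, ∃ f ∈ (∅ : Set (List A × List A)), q = (p.1 ++ f.1, p.2 ++ f.2)} = ∅ := by
      ext q; simp
    rw [hset]
    exact SyncAux.syncRegular_empty
  · intro f F' hnm hfin ih
    show SyncRegular _
    have hset : {q : List A × List A |
        ∃ p ∈ L, ∃ g ∈ insert f F', q = (p.1 ++ g.1, p.2 ++ g.2)}
        = {q | ∃ p ∈ L, q = (p.1 ++ f.1, p.2 ++ f.2)}
          ∪ {q | ∃ p ∈ L, ∃ g ∈ F', q = (p.1 ++ g.1, p.2 ++ g.2)} := by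
      ext q
      simp only [Set.mem_insert_iff, Set.mem_union, Set.mem_setOf_eq]
      constructor
      · rintro ⟨p, hp, g, (rfl | hg), rfl⟩
        · exact Or.inl ⟨p, hp, rfl⟩
        · exact Or.inr ⟨p, hp, g, hg, rfl⟩
      · rintro (⟨p, hp, rfl⟩ | ⟨p, hp, g, hg, rfl⟩)
        · exact ⟨p, hp, f, Or.inl rfl, rfl⟩
        · exact ⟨p, hp, g, Or.inr hg, rfl⟩
    rw [hset]
    exact SyncAux.syncRegular_union (SyncAux.syncRegular_appendPair f hL) ih
end
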